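/- Let A be a proper connective dg algebra and d ≥ 1 with A ∈ H^d. The truncation functor t^{>-d}: per(A)^{[-d,0]} → H^d is full and dense, and a morphism f: P → P' in per(A)^{[-d,0]} satisfies t^{>-d}(f) = 0 if and only if f factors through an object of add(A[d]). Consequently, t^{>-d} induces an equivalence per(A)^{[-d,0]}/add(A[d]) ≃ H^d. -/

import Mathlib

open CategoryTheory Category Limits Pretriangulated Triangulated ZeroObject

universe w v u

namespace Paper

section Defs

variable {C : Type u} [Category.{v} C] [Preadditive C] [HasZeroObject C]
  [HasShift C ℤ] [∀ n : ℤ, (shiftFunctor C n).Additive] [Pretriangulated C]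
  [HasFiniteBiproducts C] [HasBinaryBiproducts C]

/-- `X` lies in `add A`: it is a direct summand of a finite direct sum of copies of `A`. -/
def inAdd (A X : C) : Prop :=
  ∃ (n : ℕ) (s : X ⟶ ⨁ fun _ : Fin n => A) (p : (⨁ fun _ : Fin n => A) ⟶ X), s ≫ p = 𝟙 X

/-- The star operation `S ∗ T` on classes of objects of a (pre)triangulated category:
objects `E` admitting a distinguished triangle `X ⟶ E ⟶ Y ⟶ X⟦1⟧` with `X ∈ S`, `Y ∈ T`. -/
def star (S T : Set C) : Set C :=
  {E | ∃ (X : C) (_ : X ∈ S) (Y : C) (_ : Y ∈ T) (f : X ⟶ E) (g : E ⟶ Y)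
    (h : Y ⟶ X⟦(1 : ℤ)⟧), Triangle.mk f g h ∈ distTriang C}

/-- `add (A⟦i⟧)` as a class of objects. -/
def addShift (A : C) (i : ℤ) : Set C := {X | inAdd (A⟦i⟧) X}

/-- `per(A)^{[-n,0]} = add(A) ∗ add(A)[1] ∗ ⋯ ∗ add(A)[n]`. -/
def perInterval (A : C) : ℕ → Set C
  | 0 => addShift A 0
  | n + 1 => star (perInterval A n) (addShift A (n + 1))

/-- `thick(DA)^{[0,n]} = add(DA)[-n] ∗ ⋯ ∗ add(DA)[-1] ∗ add(DA)`. -/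
def coInterval (DA : C) : ℕ → Set C
  | 0 => addShift DA 0
  | n + 1 => star (addShift DA (-(n + 1 : ℕ))) (coInterval DA n)

/-- The extended heart `H^d = T^{≤ 0} ∩ T^{> -d}`. -/
def Hd (t : TStructure C) (d : ℕ) : Set C := {X | t.le 0 X ∧ t.ge (1 - (d : ℤ)) X}

/-- Projectivity in the extriangulated category given by an extension-closed class `S`:
`E(P, X) = Hom(P, X⟦1⟧)` vanishes for all `X ∈ S`. -/
def projOn (S : Set C) (P : C) : Prop := ∀ X ∈ S, ∀ f : P ⟶ X⟦(1 : ℤ)⟧, f = 0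

/-- Injectivity in the extriangulated category given by an extension-closed class `S`. -/
def injOn (S : Set C) (I : C) : Prop := ∀ X ∈ S, ∀ f : X ⟶ I⟦(1 : ℤ)⟧, f = 0

/-- `p : M ⟶ N` is a deflation for the extriangulated structure on the extension-closed
class `S`: it is the second map of a distinguished triangle with all terms in `S`. -/
def isDeflation (S : Set C) {M N : C} (p : M ⟶ N) : Prop :=
  ∃ (L : C) (_ : L ∈ S) (f : L ⟶ M) (h : N ⟶ L⟦(1 : ℤ)⟧),
    Triangle.mk f p h ∈ distTriang C

/-- `i : L ⟶ M` is an inflation for the extriangulated structure on `S`. -/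
def isInflation (S : Set C) {L M : C} (i : L ⟶ M) : Prop :=
  ∃ (N : C) (_ : N ∈ S) (p : M ⟶ N) (h : N ⟶ L⟦(1 : ℤ)⟧),
    Triangle.mk i p h ∈ distTriang C

/-- `f` factors through an object of `add W`. -/
def factorsThruAdd (W : C) {X Y : C} (f : X ⟶ Y) : Prop :=
  ∃ (Q : C) (_ : inAdd W Q) (a : X ⟶ Q) (b : Q ⟶ Y), f = a ≫ b

/-- An indecomposable object: nonzero, and in any direct sum decomposition one summand
vanishes. -/
def Indec (X : C) : Prop :=
  ¬ IsZero X ∧ ∀ Y Z : C, Nonempty (X ≅ Y ⊞ Z) → IsZero Y ∨ IsZero Z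

/-- Data of the truncation functor `t^{≥ n}`, left adjoint to the inclusion of `T^{≥ n}`,
together with its unit and the truncation triangles. -/
structure TruncGEData (t : TStructure C) (n : ℤ) where
  F : C ⥤ C
  η : 𝟭 C ⟶ F
  ge : ∀ X : C, t.ge n (F.obj X)
  tri : ∀ X : C, ∃ (Z : C) (_ : t.le (n - 1) Z) (f : Z ⟶ X) (h : F.obj X ⟶ Z⟦(1 : ℤ)⟧),
    Triangle.mk f (η.app X) h ∈ distTriang C
  adj : ∀ (X W : C), t.ge n W → Function.Bijective (fun g : F.obj X ⟶ W => η.app X ≫ g)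

/-- Data of the truncation functor `t^{≤ n}`, right adjoint to the inclusion of `T^{≤ n}`,
together with its counit and the truncation triangles. -/
structure TruncLEData (t : TStructure C) (n : ℤ) where
  F : C ⥤ C
  ε : F ⟶ 𝟭 C
  le : ∀ X : C, t.le n (F.obj X)
  tri : ∀ X : C, ∃ (Z : C) (_ : t.ge (n + 1) Z) (g : X ⟶ Z) (h : Z ⟶ (F.obj X)⟦(1 : ℤ)⟧),
    Triangle.mk (ε.app X) g h ∈ distTriang C
  adj : ∀ (W X : C), t.le n W → Function.Bijective (fun g : W ⟶ F.obj X => g ≫ ε.app X)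

/-- Membership in the thick subcategory generated by `A`. -/
inductive thickMem (A : C) : C → Prop
  | base : thickMem A A
  | zero : thickMem A 0
  | iso {X Y : C} : (X ≅ Y) → thickMem A X → thickMem A Y
  | shift (X : C) (n : ℤ) : thickMem A X → thickMem A (X⟦n⟧)
  | ext₂ {X Y Z : C} {f : X ⟶ Y} {g : Y ⟶ Z} {h : Z ⟶ X⟦(1 : ℤ)⟧} :
      (Triangle.mk f g h ∈ distTriang C) → thickMem A X → thickMem A Z → thickMem A Y
  | smd {X Y : C} (s : X ⟶ Y) (p : Y ⟶ X) : s ≫ p = 𝟙 X → thickMem A Y → thickMem A X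

end Defs

/-- Abstraction of the derived category `D^fd(A)` of a proper connective dg algebra `A`
over a field `k`, with its standard t-structure: `A` is connective (cohomology in
non-positive degrees), Hom-spaces are finite dimensional (properness), the standard
t-structure is bounded on `D^fd`, `A` is derived projective and `A` generates. -/
structure DGSetup (k : Type w) [Field k] (C : Type u) [Category.{v} C] [Preadditive C]
    [HasZeroObject C] [HasShift C ℤ] [∀ n : ℤ, (shiftFunctor C n).Additive]
    [Pretriangulated C] [Linear k C] where
  t : TStructure C
  A : C
  connective : t.le 0 A
  homFinite : ∀ X Y : C, FiniteDimensional k (X ⟶ Y)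
  bounded : ∀ X : C, ∃ a b : ℤ, t.ge a X ∧ t.le b X
  A_derived_projective : ∀ X : C, t.le 0 X → ∀ f : A ⟶ X⟦(1 : ℤ)⟧, f = 0
  generates : ∀ X : C, (∀ (n : ℤ) (f : A⟦n⟧ ⟶ X), f = 0) → IsZero X

section DG

variable {k : Type w} [Field k] {C : Type u} [Category.{v} C] [Preadditive C]
  [HasZeroObject C] [HasShift C ℤ] [∀ n : ℤ, (shiftFunctor C n).Additive]
  [Pretriangulated C] [Linear k C]

/-- A derived injective object of `D^fd(A)^{≥ 0}`. -/
def DerivedInjective (S : DGSetup k C) (I : C) : Prop :=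
  S.t.ge 0 I ∧ ∀ X : C, S.t.ge 0 X → ∀ f : X ⟶ I⟦(1 : ℤ)⟧, f = 0

variable [HasFiniteBiproducts C] [HasBinaryBiproducts C]

/-- The `k`-submodule of morphisms `X ⟶ Y` factoring through `add W`. -/
def addIdeal (k : Type w) [Field k] [Linear k C] (W : C) (X Y : C) : Submodule k (X ⟶ Y) :=
  Submodule.span k {f | factorsThruAdd W f}

end DG

variable {C : Type u} [Category.{v} C] [Preadditive C] [HasZeroObject C]
  [HasShift C ℤ] [∀ n : ℤ, (shiftFunctor C n).Additive] [Pretriangulated C]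
  [HasFiniteBiproducts C] [HasBinaryBiproducts C]
  {k : Type w} [Field k] [Linear k C]

section Aux

variable {C : Type u} [Category.{v} C] [Preadditive C] [HasZeroObject C]
  [HasShift C ℤ] [∀ n : ℤ, (shiftFunctor C n).Additive] [Pretriangulated C]
  [HasFiniteBiproducts C] [HasBinaryBiproducts C]
  {k : Type w} [Field k] [Linear k C]

/-- Orthogonality for arbitrary indices. -/
lemma tzero (S : DGSetup k C) {X Y : C} (f : X ⟶ Y) (a b : ℤ) (hab : a < b)
    (hX : S.t.le a X) (hY : S.t.ge b Y) : f = 0 := by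
  have hX' : S.t.le 0 (X⟦a⟧) := S.t.le_shift a a 0 (by omega) X hX
  have hY' : S.t.ge (b - a) (Y⟦a⟧) := S.t.ge_shift b a (b - a) (by omega) Y hY
  have hY1 : S.t.ge 1 (Y⟦a⟧) := S.t.ge_antitone (by omega) _ hY'
  have hz : (shiftFunctor C a).map f = 0 := S.t.zero' _ hX' hY1
  apply (shiftFunctor C a).map_injective
  rw [hz, Functor.map_zero]

/-- Derived projectivity of `A` against objects in `LE (-1)`. -/
lemma projVanish (S : DGSetup k C) {V : C} (hV : S.t.le (-1) V) (f : S.A ⟶ V) : f = 0 := by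
  have e : (V⟦(-1 : ℤ)⟧)⟦(1 : ℤ)⟧ ≅ V := (shiftFunctorCompIsoId C (-1 : ℤ) (1 : ℤ) (by omega)).app V
  have h0 : S.t.le 0 (V⟦(-1 : ℤ)⟧) := S.t.le_shift (-1) (-1) 0 (by omega) V hV
  have hz : f ≫ e.inv = 0 := S.A_derived_projective _ h0 _
  have : f = (f ≫ e.inv) ≫ e.hom := by rw [Category.assoc, Iso.inv_hom_id, Category.comp_id]
  rw [this, hz, zero_comp]

/-- Derived projectivity of shifted copies of `A`. -/
lemma shiftedProj (S : DGSetup k C) (m u : ℤ) (hu : u + m ≤ -1) {V : C}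
    (hV : S.t.le u V) (φ : S.A⟦m⟧ ⟶ V) : φ = 0 := by
  have e : (V⟦(-m : ℤ)⟧)⟦(m : ℤ)⟧ ≅ V := (shiftFunctorCompIsoId C (-m) m (by omega)).app V
  obtain ⟨χ, hχ⟩ := (shiftFunctor C m).map_surjective (φ ≫ e.inv)
  have hV' : S.t.le (-1) (V⟦(-m : ℤ)⟧) := by
    have := S.t.le_shift u (-m) (u + m) (by omega) V hV
    exact S.t.le_monotone (show u + m ≤ -1 from hu) _ this
  have hχ0 : χ = 0 := projVanish S hV' χ
  have : φ = (φ ≫ e.inv) ≫ e.hom := by rw [Category.assoc, Iso.inv_hom_id, Category.comp_id]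
  rw [this, ← hχ, hχ0, Functor.map_zero, zero_comp]

/-- Transport vanishing of maps out of `A⟦m-1⟧` to maps `A⟦m⟧ ⟶ E⟦1⟧`. -/
lemma shiftHomConj (S : DGSetup k C) (m : ℤ) {E : C}
    (hE : ∀ ψ : S.A⟦(m - 1 : ℤ)⟧ ⟶ E, ψ = 0) (φ : S.A⟦m⟧ ⟶ E⟦(1 : ℤ)⟧) : φ = 0 := by
  have e : S.A⟦m⟧ ≅ (S.A⟦(m - 1 : ℤ)⟧)⟦(1 : ℤ)⟧ :=
    (shiftFunctorAdd' C (m - 1) 1 m (by omega)).app S.A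
  obtain ⟨ψ, hψ⟩ := (shiftFunctor C (1 : ℤ)).map_surjective (e.inv ≫ φ)
  have : φ = e.hom ≫ (e.inv ≫ φ) := by rw [Iso.hom_inv_id_assoc]
  rw [this, ← hψ, hE ψ, Functor.map_zero, comp_zero]

/-- Maps out of objects of `add B` vanish if maps out of `B` do. -/
lemma inAdd_hom_vanish {B Q W : C} (hQ : inAdd B Q) (hB : ∀ φ : B ⟶ W, φ = 0)
    (f : Q ⟶ W) : f = 0 := by
  obtain ⟨n, s, p, hsp⟩ := hQ
  have hp : p ≫ f = 0 := by
    apply biproduct.hom_ext'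
    intro j
    rw [comp_zero, ← Category.assoc]
    exact hB _
  calc f = (s ≫ p) ≫ f := by rw [hsp, Category.id_comp]
  _ = s ≫ (p ≫ f) := by rw [Category.assoc]
  _ = 0 := by rw [hp, comp_zero]

/-- Maps out of objects of `per(A)^{[0,n]}` vanish when maps out of the `A⟦m⟧` do. -/
lemma perHomVanish (S : DGSetup k C) (n : ℕ) {W : C}
    (hW : ∀ m : ℤ, 0 ≤ m → m ≤ (n : ℤ) → ∀ φ : S.A⟦m⟧ ⟶ W, φ = 0) :
    ∀ {P : C}, P ∈ perInterval S.A n → ∀ f : P ⟶ W, f = 0 := by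
  induction n with
  | zero =>
    intro P hP f
    have hP' : inAdd (S.A⟦(0 : ℤ)⟧) P := hP
    exact inAdd_hom_vanish hP' (hW 0 le_rfl (by omega)) f
  | succ n ih =>
    intro P hP f
    have hP' : P ∈ star (perInterval S.A n) (addShift S.A (n + 1)) := hP
    obtain ⟨Xp, hXp, Yp, hYp, u, v, w, hTs⟩ := hP'
    have hfu : u ≫ f = 0 := ih (fun m h0 hn φ => hW m h0 (by omega) φ) hXp _
    obtain ⟨g0, hg0⟩ : ∃ g0 : Yp ⟶ W, f = v ≫ g0 := Triangle.yoneda_exact₂ _ hTs f hfu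
    have hYp' : inAdd (S.A⟦((n : ℤ) + 1)⟧) Yp := hYp
    have hg00 : g0 = 0 := inAdd_hom_vanish hYp' (hW ((n : ℤ) + 1) (by omega) (by omega)) g0
    rw [hg0, hg00, comp_zero]

/-- Objects of `per(A)^{[0,n]}` are in `LE 0`. -/
lemma leOfVanishing (S : DGSetup k C) {X : C}
    (hX : ∀ W : C, S.t.ge 1 W → ∀ f : X ⟶ W, f = 0) : S.t.le 0 X := by
  obtain ⟨X', Y, hX', hY, a, b, c, hTt⟩ := S.t.exists_triangle_zero_one X
  have hb : b ≫ 𝟙 Y = 0 := by rw [Category.comp_id]; exact hX Y hY b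
  obtain ⟨ψ, hψ⟩ : ∃ ψ : X'⟦(1 : ℤ)⟧ ⟶ Y, 𝟙 Y = c ≫ ψ := Triangle.yoneda_exact₃ _ hTt (𝟙 Y) hb
  have hψ0 : ψ = 0 := tzero S ψ (-1) 1 (by omega)
    (S.t.le_shift 0 1 (-1) (by omega) X' hX') hY
  have hzY : IsZero Y := by
    rw [IsZero.iff_id_eq_zero, hψ, hψ0, comp_zero]
  have : IsIso a := (Triangle.isZero₃_iff_isIso₁ _ hTt).1 hzY
  exact (S.t.le 0).prop_of_iso (asIso a) hX'

/-- The key injectivity trick: a map `A⟦m⟧ ⟶ P` killed by `π` vanishes, when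
`Hom(A⟦m+1⟧, Cn) = 0`, for a triangle `P ⟶ X ⟶ Cn`. -/
lemma injOfVan (S : DGSetup k C) {X P Cn : C} (π : P ⟶ X) (ρ : X ⟶ Cn)
    (σ : Cn ⟶ P⟦(1 : ℤ)⟧) (hT : Triangle.mk π ρ σ ∈ distTriang C) (m : ℤ)
    (hC : ∀ φ : S.A⟦(m + 1 : ℤ)⟧ ⟶ Cn, φ = 0)
    (ψ : S.A⟦m⟧ ⟶ P) (hψ : ψ ≫ π = 0) : ψ = 0 := by
  obtain ⟨g1, hg1⟩ : ∃ g1 : (S.A⟦m⟧)⟦(1 : ℤ)⟧ ⟶ Cn, (shiftFunctor C (1 : ℤ)).map ψ = g1 ≫ σ :=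
    Triangle.coyoneda_exact₃ _ (rot_of_distTriang _ hT)
    ((shiftFunctor C (1 : ℤ)).map ψ) (by
      show (shiftFunctor C (1 : ℤ)).map ψ ≫ (-(shiftFunctor C (1 : ℤ)).map π) = 0
      rw [Preadditive.comp_neg, ← Functor.map_comp, hψ, Functor.map_zero, neg_zero])
  have e2 : S.A⟦(m + 1 : ℤ)⟧ ≅ (S.A⟦m⟧)⟦(1 : ℤ)⟧ :=
    (shiftFunctorAdd' C m 1 (m + 1) rfl).app S.A
  have hg10 : g1 = 0 := by
    have h1 : g1 = e2.inv ≫ (e2.hom ≫ g1) := by rw [Iso.inv_hom_id_assoc]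
    rw [h1, hC (e2.hom ≫ g1), comp_zero]
  apply (shiftFunctor C (1 : ℤ)).map_injective
  rw [hg1, hg10, zero_comp, Functor.map_zero]

/-- There is a finite `add`-cover of any Hom-space. -/
lemma coverExists (S : DGSetup k C) (B Y : C) :
    ∃ (N : ℕ) (g : (⨁ fun _ : Fin N => B) ⟶ Y),
      ∀ φ : B ⟶ Y, ∃ ι : B ⟶ ⨁ fun _ : Fin N => B, φ = ι ≫ g := by
  have : FiniteDimensional k (B ⟶ Y) := S.homFinite B Y
  let b := Module.finBasis k (B ⟶ Y)
  refine ⟨_, biproduct.desc (fun j => b j), fun φ => ?_⟩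
  refine ⟨biproduct.lift (fun j => b.repr φ j • 𝟙 B), ?_⟩
  rw [biproduct.lift_desc]
  simp only [Linear.smul_comp, Category.id_comp]
  exact (b.sum_repr φ).symm

/-- The inductive step: enlarging an approximation `P ⟶ X` by a cover
`Q ∈ add(A⟦r⟧)` of the cone. -/
lemma stepLemma (S : DGSetup k C) (r : ℤ) {X P Cn : C}
    (π : P ⟶ X) (ρ : X ⟶ Cn) (σ : Cn ⟶ P⟦(1 : ℤ)⟧)
    (hT : Triangle.mk π ρ σ ∈ distTriang C)
    (hVan : ∀ m : ℤ, m ≤ r - 1 → ∀ φ : S.A⟦m⟧ ⟶ Cn, φ = 0) :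
    ∃ (P' Q : C) (_ : inAdd (S.A⟦r⟧) Q)
      (α : P ⟶ P') (β : P' ⟶ Q) (δ : Q ⟶ P⟦(1 : ℤ)⟧)
      (_ : Triangle.mk α β δ ∈ distTriang C)
      (C' : C) (π' : P' ⟶ X) (ρ' : X ⟶ C') (σ' : C' ⟶ P'⟦(1 : ℤ)⟧)
      (_ : Triangle.mk π' ρ' σ' ∈ distTriang C),
      α ≫ π' = π ∧ ∀ m : ℤ, m ≤ r → ∀ φ : S.A⟦m⟧ ⟶ C', φ = 0 := by
  obtain ⟨N, g, hg⟩ := coverExists S (S.A⟦r⟧) Cn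
  have hQ : inAdd (S.A⟦r⟧) (⨁ fun _ : Fin N => S.A⟦r⟧) := ⟨N, 𝟙 _, 𝟙 _, by simp⟩
  obtain ⟨P', α, β, hT'⟩ := distinguished_cocone_triangle₂ (g ≫ σ)
  obtain ⟨π', hπ'1, hπ'2⟩ : ∃ π' : P' ⟶ X, α ≫ π' = 𝟙 P ≫ π ∧ β ≫ g = π' ≫ ρ :=
    complete_distinguished_triangle_morphism₂
    (Triangle.mk α β (g ≫ σ)) (Triangle.mk π ρ σ) hT' hT (𝟙 P) g (by
      show (g ≫ σ) ≫ (shiftFunctor C (1 : ℤ)).map (𝟙 P) = g ≫ σ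
      simp)
  try dsimp only [Triangle.mk] at π' hπ'1 hπ'2
  rw [Category.id_comp] at hπ'1
  -- hπ'1 : α ≫ π' = π ; hπ'2 : β ≫ g = π' ≫ ρ
  have hg' : ∀ m : ℤ, m ≤ r → ∀ φ : S.A⟦m⟧ ⟶ Cn,
      ∃ ι : S.A⟦m⟧ ⟶ ⨁ fun _ : Fin N => S.A⟦r⟧, φ = ι ≫ g := by
    intro m hm φ
    rcases eq_or_lt_of_le hm with rfl | hlt
    · exact hg φ
    · exact ⟨0, by rw [hVan m (by omega) φ, zero_comp]⟩
  have hInj : ∀ m : ℤ, m ≤ r - 1 → ∀ ψ : S.A⟦m⟧ ⟶ P', ψ ≫ π' = 0 → ψ = 0 := by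
    intro m hm ψ hψ
    have hψβ : ψ ≫ β = 0 := by
      apply biproduct.hom_ext
      intro j
      rw [zero_comp, Category.assoc]
      exact shiftedProj S m (-r) (by omega)
        (S.t.le_shift 0 r (-r) (by omega) S.A S.connective) _
    obtain ⟨ψ₀, hψ₀⟩ : ∃ ψ₀ : S.A⟦m⟧ ⟶ P, ψ = ψ₀ ≫ α := Triangle.coyoneda_exact₂ _ hT' ψ hψβ
    try dsimp only [Triangle.mk] at hψ₀
    have hψ₀π : ψ₀ ≫ π = 0 := by
      rw [← hπ'1, ← Category.assoc, ← hψ₀, hψ]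
    obtain ⟨g1, hg1⟩ : ∃ g1 : (S.A⟦m⟧)⟦(1 : ℤ)⟧ ⟶ Cn, (shiftFunctor C (1 : ℤ)).map ψ₀ = g1 ≫ σ :=
      Triangle.coyoneda_exact₃ _ (rot_of_distTriang _ hT)
      ((shiftFunctor C (1 : ℤ)).map ψ₀) (by
        show (shiftFunctor C (1 : ℤ)).map ψ₀ ≫ (-(shiftFunctor C (1 : ℤ)).map π) = 0
        rw [Preadditive.comp_neg, ← Functor.map_comp, hψ₀π, Functor.map_zero, neg_zero])
    try dsimp only [Triangle.mk, Triangle.rotate] at hg1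
    have e2 : S.A⟦(m + 1 : ℤ)⟧ ≅ (S.A⟦m⟧)⟦(1 : ℤ)⟧ :=
      (shiftFunctorAdd' C m 1 (m + 1) rfl).app S.A
    obtain ⟨ι1, hι1⟩ := hg' (m + 1) (by omega) (e2.hom ≫ g1)
    have hg1e : g1 = e2.inv ≫ (ι1 ≫ g) := by rw [← hι1, Iso.inv_hom_id_assoc]
    have hdz : (g ≫ σ) ≫ (shiftFunctor C (1 : ℤ)).map α = 0 :=
      comp_distTriang_mor_zero₃₁ _ hT'
    apply (shiftFunctor C (1 : ℤ)).map_injective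
    rw [Functor.map_zero, hψ₀, Functor.map_comp, hg1, hg1e]
    simp only [Category.assoc]
    rw [← Category.assoc g σ ((shiftFunctor C (1 : ℤ)).map α), hdz, comp_zero, comp_zero]
  have hSurj : ∀ m : ℤ, m ≤ r → ∀ χ : S.A⟦m⟧ ⟶ X, ∃ ξ : S.A⟦m⟧ ⟶ P', χ = ξ ≫ π' := by
    intro m hm χ
    obtain ⟨ι, hι⟩ := hg' m hm (χ ≫ ρ)
    have hιδ : ι ≫ (g ≫ σ) = 0 := by
      have h23 : ρ ≫ σ = 0 := comp_distTriang_mor_zero₂₃ _ hT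
      rw [← Category.assoc, ← hι, Category.assoc, h23, comp_zero]
    obtain ⟨s, hs⟩ : ∃ s : S.A⟦m⟧ ⟶ P', ι = s ≫ β := Triangle.coyoneda_exact₃ _ hT' ι hιδ
    try dsimp only [Triangle.mk] at s hs
    have hfac : (χ - s ≫ π') ≫ ρ = 0 := by
      rw [Preadditive.sub_comp, Category.assoc, ← hπ'2, ← Category.assoc, ← hs, ← hι,
        sub_self]
    obtain ⟨ξ₀, hξ₀⟩ : ∃ ξ₀ : S.A⟦m⟧ ⟶ P, χ - s ≫ π' = ξ₀ ≫ π :=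
        Triangle.coyoneda_exact₂ _ hT (χ - s ≫ π') hfac
    try dsimp only [Triangle.mk] at hξ₀
    refine ⟨s + ξ₀ ≫ α, ?_⟩
    rw [Preadditive.add_comp, Category.assoc, hπ'1, ← hξ₀]
    abel
  obtain ⟨C', ρ', σ', hT''⟩ := distinguished_cocone_triangle π'
  refine ⟨P', _, hQ, α, β, g ≫ σ, hT', C', π', ρ', σ', hT'', hπ'1, ?_⟩
  intro m hm φ
  have hφσ' : φ ≫ σ' = 0 := by
    have e2 : S.A⟦m⟧ ≅ (S.A⟦(m - 1 : ℤ)⟧)⟦(1 : ℤ)⟧ :=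
      (shiftFunctorAdd' C (m - 1) 1 m (by omega)).app S.A
    obtain ⟨ψ, hψ⟩ := (shiftFunctor C (1 : ℤ)).map_surjective (e2.inv ≫ (φ ≫ σ'))
    have h31 : σ' ≫ (shiftFunctor C (1 : ℤ)).map π' = 0 :=
      comp_distTriang_mor_zero₃₁ _ hT''
    have hψπ' : ψ ≫ π' = 0 := by
      apply (shiftFunctor C (1 : ℤ)).map_injective
      rw [Functor.map_comp, hψ, Functor.map_zero, Category.assoc, Category.assoc, h31,
        comp_zero, comp_zero]
    have hψ0 : ψ = 0 := hInj (m - 1) (by omega) ψ hψπ'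
    have : φ ≫ σ' = e2.hom ≫ (e2.inv ≫ (φ ≫ σ')) := by rw [Iso.hom_inv_id_assoc]
    rw [this, ← hψ, hψ0, Functor.map_zero, comp_zero]
  obtain ⟨χ, hχ⟩ : ∃ χ : S.A⟦m⟧ ⟶ X, φ = χ ≫ ρ' := Triangle.coyoneda_exact₃ _ hT'' φ hφσ'
  try dsimp only [Triangle.mk] at hχ
  obtain ⟨ξ, hξ⟩ := hSurj m hm χ
  have h12 : π' ≫ ρ' = 0 := comp_distTriang_mor_zero₁₂ _ hT''
  rw [hχ, hξ, Category.assoc, h12, comp_zero]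

/-- Building an approximation `P ∈ per(A)^{[-n,0]}` of any `X ∈ LE 0`. -/
lemma buildP (S : DGSetup k C) (X : C) (hX : S.t.le 0 X) :
    ∀ n : ℕ, ∃ (P Cn : C) (_ : P ∈ perInterval S.A n) (π : P ⟶ X) (ρ : X ⟶ Cn)
      (σ : Cn ⟶ P⟦(1 : ℤ)⟧) (_ : Triangle.mk π ρ σ ∈ distTriang C),
      ∀ m : ℤ, m ≤ (n : ℤ) → ∀ φ : S.A⟦m⟧ ⟶ Cn, φ = 0 := by
  intro n
  induction n with
  | zero =>
    have hbase : Triangle.mk (0 : (0 : C) ⟶ X) (𝟙 X) (0 : X ⟶ (0 : C)⟦(1 : ℤ)⟧)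
        ∈ distTriang C := contractible_distinguished₁ X
    obtain ⟨P', Q, hQ, α, β, δ, hT', C', π', ρ', σ', hT'', hαπ, hVan'⟩ :=
      stepLemma S 0 _ _ _ hbase (fun m hm φ => shiftedProj S m 0 (by omega) hX φ)
    have hβ : IsIso β := by
      have hz : IsZero (((0 : C))⟦(1 : ℤ)⟧) :=
        (shiftFunctor C (1 : ℤ)).map_isZero (isZero_zero C)
      exact (Triangle.isZero₃_iff_isIso₁ _ (rot_of_distTriang _ hT')).1 hz
    obtain ⟨N', s, p, hsp⟩ := hQ
    refine ⟨P', C', ?_, π', ρ', σ', hT'', fun m hm φ => hVan' m (by omega) φ⟩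
    show inAdd (S.A⟦(0 : ℤ)⟧) P'
    refine ⟨N', β ≫ s, p ≫ inv β, ?_⟩
    rw [Category.assoc, ← Category.assoc s p, hsp, Category.id_comp, IsIso.hom_inv_id]
  | succ n ih =>
    obtain ⟨P, Cn, hP, π, ρ, σ, hT, hVan⟩ := ih
    obtain ⟨P', Q, hQ, α, β, δ, hT', C', π', ρ', σ', hT'', hαπ, hVan'⟩ :=
      stepLemma S ((n : ℤ) + 1) π ρ σ hT (fun m hm φ => hVan m (by omega) φ)
    refine ⟨P', C', ?_, π', ρ', σ', hT'', fun m hm φ => hVan' m (by omega) φ⟩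
    show P' ∈ star (perInterval S.A n) (addShift S.A (n + 1))
    exact ⟨P, hP, Q, hQ, α, β, δ, hT'⟩

/-- Part 1: values in `H^d`. -/
lemma part1 (S : DGSetup k C) (d : ℕ) (T : TruncGEData S.t (1 - (d : ℤ))) {P : C}
    (hP : P ∈ perInterval S.A d) : T.F.obj P ∈ Hd S.t d := by
  refine ⟨?_, T.ge P⟩
  apply leOfVanishing S
  intro W hW w
  obtain ⟨Z, hZ, ζ, hh, hTZ⟩ := T.tri P
  have h1 : T.η.app P ≫ w = 0 := perHomVanish S d
    (fun m h0 hm φ => tzero S φ (-m) 1 (by omega)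
      (S.t.le_shift 0 m (-m) (by omega) S.A S.connective) hW) hP _
  obtain ⟨ψ, hψ⟩ : ∃ ψ : Z⟦(1 : ℤ)⟧ ⟶ W, w = hh ≫ ψ := Triangle.yoneda_exact₃ _ hTZ w h1
  have hψ0 : ψ = 0 := tzero S ψ (1 - (d : ℤ) - 2) 1 (by omega)
    (S.t.le_shift (1 - (d : ℤ) - 1) 1 (1 - (d : ℤ) - 2) (by ring) Z hZ) hW
  rw [hψ, hψ0, comp_zero]

/-- Part 2: density. -/
lemma part2 (S : DGSetup k C) (d : ℕ) (T : TruncGEData S.t (1 - (d : ℤ))) (X : C)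
    (hX : X ∈ Hd S.t d) : ∃ P ∈ perInterval S.A d, Nonempty (T.F.obj P ≅ X) := by
  obtain ⟨hX1, hX2⟩ := hX
  obtain ⟨P, Cd, hP, π, ρ, σ, hT, hVan⟩ := buildP S X hX1 d
  obtain ⟨π₁, hπ₁⟩ := (T.adj P X hX2).2 π
  have hπ₁' : T.η.app P ≫ π₁ = π := hπ₁
  obtain ⟨Z, hZ, ζ, hh, hTZ⟩ := T.tri P
  have hInjF : ∀ m : ℤ, ∀ ψ : S.A⟦m⟧ ⟶ T.F.obj P, ψ ≫ π₁ = 0 → ψ = 0 := by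
    intro m ψ hψ
    by_cases hm : (d : ℤ) ≤ m
    · exact tzero S ψ (-m) (1 - (d : ℤ)) (by omega)
        (S.t.le_shift 0 m (-m) (by omega) S.A S.connective) (T.ge P)
    · push_neg at hm
      have hψh : ψ ≫ hh = 0 :=
        shiftHomConj S m (fun χ =>
          shiftedProj S (m - 1) (1 - (d : ℤ) - 1) (by omega) hZ χ) _
      obtain ⟨ψ₀, hψ₀⟩ : ∃ ψ₀ : S.A⟦m⟧ ⟶ P, ψ = ψ₀ ≫ T.η.app P :=
          Triangle.coyoneda_exact₃ _ hTZ ψ hψh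
      try dsimp only [Triangle.mk] at hψ₀
      have hψ₀π : ψ₀ ≫ π = 0 := by
        rw [← hπ₁', ← Category.assoc, ← hψ₀, hψ]
      have h0 : ψ₀ = 0 :=
        injOfVan S π ρ σ hT m (fun φ => hVan (m + 1) (by omega) φ) ψ₀ hψ₀π
      rw [hψ₀, h0, zero_comp]
  have hSurjF : ∀ m : ℤ, ∀ χ : S.A⟦m⟧ ⟶ X, ∃ ξ, χ = ξ ≫ π₁ := by
    intro m χ
    by_cases hm : (d : ℤ) ≤ m
    · have hz : χ = 0 := tzero S χ (-m) (1 - (d : ℤ)) (by omega)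
        (S.t.le_shift 0 m (-m) (by omega) S.A S.connective) hX2
      exact ⟨0, by rw [hz, zero_comp]⟩
    · push_neg at hm
      have hρ : χ ≫ ρ = 0 := hVan m (by omega) _
      obtain ⟨ξ₀, hξ₀⟩ : ∃ ξ₀ : S.A⟦m⟧ ⟶ P, χ = ξ₀ ≫ π := Triangle.coyoneda_exact₂ _ hT χ hρ
      try dsimp only [Triangle.mk] at hξ₀
      refine ⟨ξ₀ ≫ T.η.app P, ?_⟩
      rw [hξ₀, ← hπ₁', Category.assoc]
  obtain ⟨Ch, ρh, σh, hTh⟩ := distinguished_cocone_triangle π₁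
  have hzero : IsZero Ch := by
    apply S.generates
    intro n f
    have hfσ : f ≫ σh = 0 := by
      have e2 : S.A⟦n⟧ ≅ (S.A⟦(n - 1 : ℤ)⟧)⟦(1 : ℤ)⟧ :=
        (shiftFunctorAdd' C (n - 1) 1 n (by omega)).app S.A
      obtain ⟨ψ, hψ⟩ := (shiftFunctor C (1 : ℤ)).map_surjective (e2.inv ≫ (f ≫ σh))
      have h31 : σh ≫ (shiftFunctor C (1 : ℤ)).map π₁ = 0 :=
        comp_distTriang_mor_zero₃₁ _ hTh
      have h1 : ψ ≫ π₁ = 0 := by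
        apply (shiftFunctor C (1 : ℤ)).map_injective
        rw [Functor.map_comp, hψ, Functor.map_zero, Category.assoc, Category.assoc, h31,
          comp_zero, comp_zero]
      have h2 : ψ = 0 := hInjF (n - 1) ψ h1
      have : f ≫ σh = e2.hom ≫ (e2.inv ≫ (f ≫ σh)) := by rw [Iso.hom_inv_id_assoc]
      rw [this, ← hψ, h2, Functor.map_zero, comp_zero]
    obtain ⟨χ, hχ⟩ : ∃ χ : S.A⟦n⟧ ⟶ X, f = χ ≫ ρh := Triangle.coyoneda_exact₃ _ hTh f hfσ
    try dsimp only [Triangle.mk] at hχ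
    obtain ⟨ξ, hξ⟩ := hSurjF n χ
    have h12 : π₁ ≫ ρh = 0 := comp_distTriang_mor_zero₁₂ _ hTh
    rw [hχ, hξ, Category.assoc, h12, comp_zero]
  have : IsIso π₁ := (Triangle.isZero₃_iff_isIso₁ _ hTh).1 hzero
  exact ⟨P, hP, ⟨asIso π₁⟩⟩

/-- Part 3: fullness. -/
lemma part3 (S : DGSetup k C) (d : ℕ) (T : TruncGEData S.t (1 - (d : ℤ))) {P P' : C}
    (hP : P ∈ perInterval S.A d) (hP' : P' ∈ perInterval S.A d)
    (g : T.F.obj P ⟶ T.F.obj P') : ∃ f : P ⟶ P', T.F.map f = g := by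
  obtain ⟨Z', hZ', ζ', hh', hTZ⟩ := T.tri P'
  have h1 : (T.η.app P ≫ g) ≫ hh' = 0 := by
    have := perHomVanish S d (fun m h0 hm φ => shiftHomConj S m
      (fun χ => shiftedProj S (m - 1) (1 - (d : ℤ) - 1) (by omega) hZ' χ) φ) hP
      ((T.η.app P ≫ g) ≫ hh')
    exact this
  obtain ⟨f, hf⟩ : ∃ f : P ⟶ P', T.η.app P ≫ g = f ≫ T.η.app P' :=
    Triangle.coyoneda_exact₃ _ hTZ (T.η.app P ≫ g) h1
  try dsimp only [Triangle.mk, Functor.id_obj] at f hf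
  refine ⟨f, (T.adj P (T.F.obj P') (T.ge P')).1 ?_⟩
  show T.η.app P ≫ T.F.map f = T.η.app P ≫ g
  have hnat := T.η.naturality f
  rw [Functor.id_map] at hnat
  try dsimp only [Functor.id_obj] at hnat
  rw [← hnat, ← hf]

/-- Part 4: kernel ideal. -/
lemma part4 (S : DGSetup k C) (d : ℕ) (hd : 1 ≤ d) (T : TruncGEData S.t (1 - (d : ℤ)))
    {P P' : C} (hP : P ∈ perInterval S.A d) (hP' : P' ∈ perInterval S.A d) (f : P ⟶ P') :
    T.F.map f = 0 ↔ factorsThruAdd (S.A⟦(d : ℤ)⟧) f := by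
  have hnat := T.η.naturality f
  rw [Functor.id_map] at hnat
  try dsimp only [Functor.id_obj] at hnat
  -- hnat : f ≫ T.η.app P' = T.η.app P ≫ T.F.map f
  constructor
  · intro h0
    have hfη : f ≫ T.η.app P' = 0 := by rw [hnat, h0, comp_zero]
    obtain ⟨Z', hZ', ζ', hh', hTZ⟩ := T.tri P'
    obtain ⟨e, he⟩ : ∃ e : P ⟶ Z', f = e ≫ ζ' := Triangle.coyoneda_exact₂ _ hTZ f hfη
    obtain ⟨a, rfl⟩ : ∃ a, d = a + 1 := ⟨d - 1, (Nat.succ_pred_eq_of_pos hd).symm⟩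
    have hP2 : P ∈ star (perInterval S.A a) (addShift S.A (a + 1)) := hP
    obtain ⟨P₁, hP₁, Yp, hYp, u, v, w, hTs⟩ := hP2
    have hue : u ≫ e = 0 := perHomVanish S a (fun m h0 hm φ =>
      shiftedProj S m (1 - ((a + 1 : ℕ) : ℤ) - 1) (by omega) hZ' φ) hP₁ _
    have huf : u ≫ f = 0 := by rw [he, ← Category.assoc, hue, zero_comp]
    obtain ⟨b, hb⟩ : ∃ b : Yp ⟶ P', f = v ≫ b := Triangle.yoneda_exact₂ _ hTs f huf
    refine ⟨Yp, ?_, v, b, hb⟩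
    have hcast : (((a + 1 : ℕ)) : ℤ) = (a : ℤ) + 1 := by push_cast; ring
    rw [hcast]
    exact hYp
  · rintro ⟨Q, hQ, a', b', hfab⟩
    apply (T.adj P (T.F.obj P') (T.ge P')).1
    show T.η.app P ≫ T.F.map f = T.η.app P ≫ 0
    have hb0 : b' ≫ T.η.app P' = 0 := inAdd_hom_vanish hQ
      (fun φ => tzero S φ (-(d : ℤ)) (1 - (d : ℤ)) (by omega)
        (S.t.le_shift 0 (d : ℤ) (-(d : ℤ)) (by omega) S.A S.connective) (T.ge P'))
      (b' ≫ T.η.app P')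
    rw [comp_zero, ← hnat, hfab, Category.assoc, hb0, comp_zero]

end Aux

/-- The truncation functor `t^{>-d} : per(A)^{[-d,0]} → H^d` takes
values in `H^d`, is dense and full, and its kernel ideal consists exactly of the
morphisms factoring through `add(A⟦d⟧)`; consequently it induces an equivalence
`per(A)^{[-d,0]} / add(A⟦d⟧) ≃ H^d`. -/
theorem stmt11 (S : DGSetup k C) (d : ℕ) (hd : 1 ≤ d) (hA : S.A ∈ Hd S.t d)
    (T : TruncGEData S.t (1 - (d : ℤ))) :
    (∀ P ∈ perInterval S.A d, T.F.obj P ∈ Hd S.t d) ∧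
    (∀ X ∈ Hd S.t d, ∃ P ∈ perInterval S.A d, Nonempty (T.F.obj P ≅ X)) ∧
    (∀ P ∈ perInterval S.A d, ∀ P' ∈ perInterval S.A d,
      ∀ g : T.F.obj P ⟶ T.F.obj P', ∃ f : P ⟶ P', T.F.map f = g) ∧
    (∀ P ∈ perInterval S.A d, ∀ P' ∈ perInterval S.A d, ∀ f : P ⟶ P',
      T.F.map f = 0 ↔ factorsThruAdd (S.A⟦(d : ℤ)⟧) f) := by
  refine ⟨fun P hP => part1 S d T hP, fun X hX => part2 S d T X hX,
    fun P hP P' hP' g => part3 S d T hP hP' g,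
    fun P hP P' hP' f => part4 S d hd T hP hP' f⟩

end Paper
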